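/- arXiv:2011.11056 — 2 statements merged into one kernel-verified Lean document; each statement's English description precedes it below -/
import Mathlib

section
/- For every integer a ≥ 5 there exists a real number α with 1 < α < 2 such that Δ_{a,0}(α) = 0 and Δ_{a,0}(x) > 0 for all real x > α; in particular, the largest real root x_{a,0} of Δ_{a,0} satisfies 1 < x_{a,0} < 2. -/
open Polynomial Finset

/-- The polynomials `P n` defined by `P 0 = 1` and
`n * P n = X * ∑_{k=1}^n σ(k) * P (n-k)`, i.e. the coefficients of
`∏ (1 - q^j)^{-x} = ∑ P_n(x) q^n`. -/
noncomputable def P : ℕ → Polynomial ℝ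
  | 0 => 1
  | n + 1 => ((n + 1 : ℝ)⁻¹) • (X * ∑ k ∈ Finset.range (n + 1),
      ((∑ d ∈ (k + 1).divisors, d : ℕ) : ℝ) • P (n - k))

/-- `Δ a b = P (a-1) * P (b+1) - P a * P b`. -/
noncomputable def Δ (a b : ℕ) : Polynomial ℝ :=
  P (a - 1) * P (b + 1) - P a * P b

def sig (k : ℕ) : ℕ := ∑ d ∈ k.divisors, d

noncomputable def Q (n : ℕ) (x : ℝ) : ℝ := (P n).eval x

lemma Q_zero (x : ℝ) : Q 0 x = 1 := by simp [Q, P]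

lemma Q_rec (n : ℕ) (x : ℝ) :
    ((n : ℝ) + 1) * Q (n + 1) x
      = x * ∑ k ∈ Finset.range (n + 1), (sig (k + 1) : ℝ) * Q (n - k) x := by
  have h : (P (n+1)) = ((n + 1 : ℝ)⁻¹) • (X * ∑ k ∈ Finset.range (n + 1),
      ((∑ d ∈ (k + 1).divisors, d : ℕ) : ℝ) • P (n - k)) := by rw [P]
  have hne : ((n : ℝ) + 1) ≠ 0 := by positivity
  simp only [Q, h, eval_smul, eval_mul, eval_finset_sum, eval_X, smul_eq_mul]
  rw [← mul_assoc, mul_inv_cancel₀ hne, one_mul, Finset.mul_sum, Finset.mul_sum]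
  rfl

lemma sig_one_le (k : ℕ) : 1 ≤ sig (k + 1) := by
  have h1 : (1 : ℕ) ∈ (k+1).divisors := Nat.one_mem_divisors.mpr (Nat.succ_ne_zero k)
  exact Finset.single_le_sum (fun i _ => Nat.zero_le i) h1

lemma sig_ge (j : ℕ) (hj : 2 ≤ j) : j + 1 ≤ sig j := by
  have hsub : ({1, j} : Finset ℕ) ⊆ j.divisors := by
    intro d hd
    simp only [Finset.mem_insert, Finset.mem_singleton] at hd
    rcases hd with rfl | rfl
    · exact Nat.one_mem_divisors.mpr (by omega)
    · exact Nat.mem_divisors_self _ (by omega)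
  have hpair : ∑ d ∈ ({1, j} : Finset ℕ), d = 1 + j := by
    rw [Finset.sum_pair (by omega)]
  calc j + 1 = ∑ d ∈ ({1, j} : Finset ℕ), d := by omega
    _ ≤ sig j := Finset.sum_le_sum_of_subset hsub

lemma Q_pos (n : ℕ) (x : ℝ) (hx : 0 < x) : 0 < Q n x := by
  induction n using Nat.strong_induction_on with
  | _ n ih =>
    match n with
    | 0 => simp [Q_zero]
    | n + 1 =>
      have hrec := Q_rec n x
      have hpos : 0 < x * ∑ k ∈ Finset.range (n + 1), (sig (k + 1) : ℝ) * Q (n - k) x := by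
        apply mul_pos hx
        apply Finset.sum_pos
        · intro k hk
          have h1 : (1 : ℝ) ≤ (sig (k+1) : ℝ) := by exact_mod_cast sig_one_le k
          have h2 : 0 < Q (n - k) x := ih (n - k) (by omega)
          positivity
        · exact Finset.nonempty_range_add_one
      have hne : (0:ℝ) < (n : ℝ) + 1 := by positivity
      nlinarith [hrec]

lemma Q_mono_succ (n : ℕ) (x : ℝ) (hx : 1 ≤ x) : Q n x ≤ Q (n + 1) x := by
  induction n using Nat.strong_induction_on with
  | _ n ih =>
    match n with
    | 0 =>
      have : Q 1 x = x := by
        have h := Q_rec 0 x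
        simp [Q_zero, sig] at h
        simpa [Q_zero] using h
      rw [Q_zero, this]; exact hx
    | m + 1 =>
      have e2 := Q_rec (m + 1) x
      have e1 := Q_rec m x
      -- split last term of e2's sum
      rw [Finset.sum_range_succ] at e2
      have hlast : (m + 1) - (m + 1) = 0 := by omega
      rw [hlast, Q_zero, mul_one] at e2
      -- e2 : (m+2) Q(m+2) = x * (∑_{k<m+1} sig(k+1) Q(m+1-k) + sig(m+2))
      have hdiff : ∀ k ∈ Finset.range (m + 1),
          (sig (k+1) : ℝ) * Q (m - k) x + 1 * (Q ((m+1) - k) x - Q (m - k) x)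
            ≤ (sig (k+1) : ℝ) * Q ((m+1) - k) x := by
        intro k hk
        simp only [Finset.mem_range] at hk
        have hidx : (m + 1) - k = (m - k) + 1 := by omega
        have hd : 0 ≤ Q ((m+1) - k) x - Q (m - k) x := by
          rw [hidx]
          have := ih (m - k) (by omega) -- wrong: ih gives Q (m-k) ≤ Q (m-k+1) only for m-k < m+1
          linarith
        have hs : (1 : ℝ) ≤ (sig (k+1) : ℝ) := by exact_mod_cast sig_one_le k
        nlinarith
      have htel : ∑ k ∈ Finset.range (m+1), (Q ((m+1) - k) x - Q (m - k) x)
          = Q (m+1) x - Q 0 x := by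
        have := Finset.sum_range_sub' (fun k => Q ((m+1) - k) x) (m+1)
        simp only [Nat.sub_self, Nat.sub_zero] at this
        rw [← this]
        apply Finset.sum_congr rfl
        intro k hk
        simp only [Finset.mem_range] at hk
        congr 2
        omega
      have hsum : ∑ k ∈ Finset.range (m+1), (sig (k+1) : ℝ) * Q (m - k) x
            + (Q (m+1) x - Q 0 x)
          ≤ ∑ k ∈ Finset.range (m+1), (sig (k+1) : ℝ) * Q ((m+1) - k) x := by
        calc ∑ k ∈ Finset.range (m+1), (sig (k+1) : ℝ) * Q (m - k) x + (Q (m+1) x - Q 0 x)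
            = ∑ k ∈ Finset.range (m+1), ((sig (k+1) : ℝ) * Q (m - k) x
                + 1 * (Q ((m+1) - k) x - Q (m - k) x)) := by
              rw [Finset.sum_add_distrib]
              simp only [one_mul]
              rw [htel]
          _ ≤ _ := Finset.sum_le_sum hdiff
      -- conclude
      have hQpos : 0 < Q (m+1) x := Q_pos (m+1) x (by linarith)
      have hsig : (m + 3 : ℝ) ≤ (sig (m+2) : ℝ) := by
        exact_mod_cast sig_ge (m+2) (by omega)
      rw [Q_zero] at hsum
      have hxpos : (0:ℝ) < x := by linarith
      have hmul := mul_le_mul_of_nonneg_left hsum hxpos.le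
      push_cast at e1 e2
      rw [Finset.mul_sum] at hmul
      nlinarith [hmul, e1, e2, hsig, hQpos, mul_nonneg (sub_nonneg.2 hx) hQpos.le, hx,
        mul_le_mul_of_nonneg_left hsig hxpos.le]

lemma Q_index_mono {i j : ℕ} (h : i ≤ j) (x : ℝ) (hx : 1 ≤ x) : Q i x ≤ Q j x :=
  monotone_nat_of_le_succ (fun n => Q_mono_succ n x hx) h

lemma Q_succ_lt (m : ℕ) (x : ℝ) (hx : 1 ≤ x) : Q (m + 1) x < Q (m + 2) x := by
  have e2 := Q_rec (m + 1) x
  have e1 := Q_rec m x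
  rw [Finset.sum_range_succ] at e2
  have hlast : (m + 1) - (m + 1) = 0 := by omega
  rw [hlast, Q_zero, mul_one] at e2
  have hdiff : ∀ k ∈ Finset.range (m + 1),
      (sig (k+1) : ℝ) * Q (m - k) x + 1 * (Q ((m+1) - k) x - Q (m - k) x)
        ≤ (sig (k+1) : ℝ) * Q ((m+1) - k) x := by
    intro k hk
    simp only [Finset.mem_range] at hk
    have hidx : (m + 1) - k = (m - k) + 1 := by omega
    have hd : 0 ≤ Q ((m+1) - k) x - Q (m - k) x := by
      rw [hidx]
      have := Q_mono_succ (m - k) x hx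
      linarith
    have hs : (1 : ℝ) ≤ (sig (k+1) : ℝ) := by exact_mod_cast sig_one_le k
    nlinarith
  have htel : ∑ k ∈ Finset.range (m+1), (Q ((m+1) - k) x - Q (m - k) x)
      = Q (m+1) x - Q 0 x := by
    have := Finset.sum_range_sub' (fun k => Q ((m+1) - k) x) (m+1)
    simp only [Nat.sub_self, Nat.sub_zero] at this
    rw [← this]
    apply Finset.sum_congr rfl
    intro k hk
    simp only [Finset.mem_range] at hk
    congr 2
    omega
  have hsum : ∑ k ∈ Finset.range (m+1), (sig (k+1) : ℝ) * Q (m - k) x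
        + (Q (m+1) x - Q 0 x)
      ≤ ∑ k ∈ Finset.range (m+1), (sig (k+1) : ℝ) * Q ((m+1) - k) x := by
    calc ∑ k ∈ Finset.range (m+1), (sig (k+1) : ℝ) * Q (m - k) x + (Q (m+1) x - Q 0 x)
        = ∑ k ∈ Finset.range (m+1), ((sig (k+1) : ℝ) * Q (m - k) x
            + 1 * (Q ((m+1) - k) x - Q (m - k) x)) := by
          rw [Finset.sum_add_distrib]
          simp only [one_mul]
          rw [htel]
      _ ≤ _ := Finset.sum_le_sum hdiff
  have hQpos : 0 < Q (m+1) x := Q_pos (m+1) x (by linarith)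
  have hsig : (m + 3 : ℝ) ≤ (sig (m+2) : ℝ) := by
    exact_mod_cast sig_ge (m+2) (by omega)
  rw [Q_zero] at hsum
  have hxpos : (0:ℝ) < x := by linarith
  have hmul := mul_le_mul_of_nonneg_left hsum hxpos.le
  push_cast at e1 e2
  rw [Finset.mul_sum] at hmul
  nlinarith [hmul, e1, e2, hsig, hQpos, mul_nonneg (sub_nonneg.2 hx) hQpos.le, hx,
    mul_le_mul_of_nonneg_left hsig hxpos.le]

lemma sig1 : sig 1 = 1 := by decide
lemma sig2 : sig 2 = 3 := by decide
lemma sig3 : sig 3 = 4 := by decide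
lemma sig4 : sig 4 = 7 := by decide

lemma Q_one (x : ℝ) : Q 1 x = x := by
  have h := Q_rec 0 x
  simp [Q_zero, sig1, Finset.sum_range_one] at h
  simpa using h

lemma Q_two (x : ℝ) : Q 2 x = (x^2 + 3*x) / 2 := by
  have h := Q_rec 1 x
  rw [Finset.sum_range_succ, Finset.sum_range_one] at h
  simp only [Nat.sub_zero, Nat.sub_self] at h
  rw [Q_one, Q_zero, sig1, sig2] at h
  push_cast at h
  linarith

lemma Q_three (x : ℝ) : Q 3 x = x^3/6 + 3*x^2/2 + 4*x/3 := by
  have h := Q_rec 2 x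
  rw [Finset.sum_range_succ, Finset.sum_range_succ, Finset.sum_range_one] at h
  norm_num at h
  rw [Q_two, Q_one, Q_zero, sig1, sig2, sig3] at h
  push_cast at h
  linarith

lemma Q_four (x : ℝ) : Q 4 x = x^4/24 + 3*x^3/4 + 59*x^2/24 + 7*x/4 := by
  have h := Q_rec 3 x
  rw [Finset.sum_range_succ, Finset.sum_range_succ, Finset.sum_range_succ,
    Finset.sum_range_one] at h
  norm_num at h
  rw [Q_three, Q_two, Q_one, Q_zero, sig1, sig2, sig3, sig4] at h
  push_cast at h
  linarith

lemma base3 (x : ℝ) (hx : 2 ≤ x) : Q 3 x ≤ x * Q 2 x := by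
  rw [Q_three, Q_two]; nlinarith [sq_nonneg x, sq_nonneg (x-2)]

lemma base4 (x : ℝ) (hx : 2 ≤ x) : Q 4 x ≤ x * Q 3 x := by
  rw [Q_four, Q_three]; nlinarith [sq_nonneg x, sq_nonneg (x-2), pow_le_pow_left₀ (by norm_num : (0:ℝ) ≤ 2) hx 2]

lemma abel_lower (c g : ℕ → ℝ) (hg0 : ∀ k, 0 ≤ g k) (hgm : ∀ k, g (k+1) ≤ g k)
    (hC : ∀ K, 0 ≤ ∑ k ∈ Finset.range K, c k) :
    ∀ m : ℕ, (∑ k ∈ Finset.range (m+1), c k) * g m ≤ ∑ k ∈ Finset.range (m+1), c k * g k := by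
  intro m
  induction m with
  | zero => simp
  | succ m ih =>
    rw [Finset.sum_range_succ (f := c), Finset.sum_range_succ (f := fun k => c k * g k)]
    have h1 : (∑ k ∈ Finset.range (m+1), c k) * g (m+1)
        ≤ (∑ k ∈ Finset.range (m+1), c k) * g m :=
      mul_le_mul_of_nonneg_left (hgm m) (hC (m+1))
    nlinarith [ih]

-- d ∈ properDivisors m → d < m/2 + 1
lemma proper_div_le (m d : ℕ) (hd : d ∈ m.properDivisors) : d < m / 2 + 1 := by
  rw [Nat.mem_properDivisors] at hd
  obtain ⟨⟨c, rfl⟩, hlt⟩ := hd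
  have hc : 2 ≤ c := by
    rcases Nat.lt_or_ge c 2 with h | h
    · interval_cases c <;> omega
    · exact h
  have : d * 2 ≤ d * c := Nat.mul_le_mul_left d hc
  have : d ≤ d * c / 2 := Nat.le_div_iff_mul_le (by norm_num) |>.mpr this
  omega

lemma sig_upper (m : ℕ) : sig m ≤ (∑ d ∈ Finset.range (m / 2 + 1), d) + m := by
  unfold sig
  rw [Nat.sum_divisors_eq_sum_properDivisors_add_self]
  have : ∑ i ∈ m.properDivisors, i ≤ ∑ d ∈ Finset.range (m / 2 + 1), d := by
    apply Finset.sum_le_sum_of_subset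
    intro d hd
    simpa using proper_div_le m d hd
  omega

lemma nat_key (K : ℕ) (hK : 1 ≤ K) :
    sig (K + 3) + 1 ≤ 4 + ∑ k ∈ Finset.range K, sig (k + 3) := by
  have h1 : sig (K + 3) ≤ (∑ d ∈ Finset.range ((K+3) / 2 + 1), d) + (K + 3) := sig_upper (K+3)
  have h2 : ∑ k ∈ Finset.range K, (k + 4) ≤ ∑ k ∈ Finset.range K, sig (k + 3) := by
    apply Finset.sum_le_sum
    intro k _
    exact sig_ge (k+3) (by omega)
  have h3 : (∑ d ∈ Finset.range ((K+3)/2 + 1), d) * 2 = ((K+3)/2 + 1) * ((K+3)/2) := by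
    simpa using Finset.sum_range_id_mul_two ((K+3)/2 + 1)
  have h4 : ∑ k ∈ Finset.range K, (k + 4) = (∑ k ∈ Finset.range K, k) + 4 * K := by
    rw [Finset.sum_add_distrib]; simp [Finset.sum_const, mul_comm]
  have h5 : (∑ k ∈ Finset.range K, k) * 2 = K * (K - 1) := Finset.sum_range_id_mul_two K
  have h6 : 2 * ((K+3)/2) ≤ K + 3 := by omega
  set h := (K+3)/2
  set s := ∑ d ∈ Finset.range (h + 1), d
  set t := ∑ k ∈ Finset.range K, k
  have hK1 : K - 1 + 1 = K := by omega
  nlinarith [h1, h2, h3, h4, h5, h6, hK]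

lemma Csum_eq (K : ℕ) :
    ∑ k ∈ Finset.range K, (2 * (sig (k+3) : ℝ) - (sig (k+4) : ℝ))
      = (∑ k ∈ Finset.range K, (sig (k+3) : ℝ)) + 4 - (sig (K+3) : ℝ) := by
  have htel : ∑ k ∈ Finset.range K, ((sig (k+3) : ℝ) - (sig (k+4) : ℝ))
      = (sig 3 : ℝ) - (sig (K+3) : ℝ) := by
    have := Finset.sum_range_sub' (fun k => (sig (k+3) : ℝ)) K
    simpa using this
  have : ∑ k ∈ Finset.range K, (2 * (sig (k+3) : ℝ) - (sig (k+4) : ℝ))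
      = ∑ k ∈ Finset.range K, ((sig (k+3) : ℝ)
        + ((sig (k+3) : ℝ) - (sig (k+4) : ℝ))) := by
    apply Finset.sum_congr rfl; intro k _; ring
  rw [this, Finset.sum_add_distrib, htel, sig3]
  push_cast
  ring

lemma Csum_nonneg (K : ℕ) :
    0 ≤ ∑ k ∈ Finset.range K, (2 * (sig (k+3) : ℝ) - (sig (k+4) : ℝ)) := by
  rcases Nat.eq_zero_or_pos K with rfl | hK
  · simp
  · rw [Csum_eq]
    have h := nat_key K hK
    have h' : ((sig (K+3) : ℝ)) + 1 ≤ 4 + ∑ k ∈ Finset.range K, (sig (k+3) : ℝ) := by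
      exact_mod_cast h
    linarith

lemma Csum_one (K : ℕ) (hK : 1 ≤ K) :
    1 ≤ ∑ k ∈ Finset.range K, (2 * (sig (k+3) : ℝ) - (sig (k+4) : ℝ)) := by
  rw [Csum_eq]
  have h' : ((sig (K+3) : ℝ)) + 1 ≤ 4 + ∑ k ∈ Finset.range K, (sig (k+3) : ℝ) := by
    exact_mod_cast nat_key K hK
  linarith

lemma B_core : ∀ n : ℕ, ∀ x : ℝ, 2 ≤ x →
    (Q (n+3) x ≤ x * Q (n+2) x) ∧ (Q (n+5) x < x * Q (n+4) x) := by
  intro n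
  induction n using Nat.strong_induction_on with
  | _ n ih =>
    intro x hx
    have hx1 : (1:ℝ) ≤ x := by linarith
    have hx0 : (0:ℝ) < x := by linarith
    have h1 : Q (n+3) x ≤ x * Q (n+2) x := by
      match n with
      | 0 => exact base3 x hx
      | 1 => exact base4 x hx
      | m + 2 => exact le_of_lt ((ih m (by omega) x hx).2)
    refine ⟨h1, ?_⟩
    -- recurrences
    have e1 := Q_rec (n+4) x
    have e2 := Q_rec (n+3) x
    push_cast at e1 e2
    set F : ℕ → ℝ := fun k => (x * (sig (k+1):ℝ) - (sig (k+2):ℝ)) * Q (n+3-k) x with hF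
    -- reindex e1
    have hre : ∑ k ∈ Finset.range (n+5), (sig (k+1):ℝ) * Q (n+4-k) x
        = (∑ k ∈ Finset.range (n+4), (sig (k+2):ℝ) * Q (n+3-k) x) + Q (n+4) x := by
      have h := Finset.sum_range_succ' (fun k => (sig (k+1):ℝ) * Q (n+4-k) x) (n+4)
      calc ∑ k ∈ Finset.range (n+5), (sig (k+1):ℝ) * Q (n+4-k) x
          = (∑ k ∈ Finset.range (n+4), (sig (k+2):ℝ) * Q (n+4-(k+1)) x)
            + (sig 1 : ℝ) * Q (n+4-0) x := h
        _ = (∑ k ∈ Finset.range (n+4), (sig (k+2):ℝ) * Q (n+3-k) x) + Q (n+4) x := by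
            rw [sig1]
            norm_num
            apply Finset.sum_congr rfl
            intro k hk
            have : n+4-(k+1) = n+3-k := by omega
            rw [this]
    rw [hre] at e1
    set A := ∑ k ∈ Finset.range (n+4), (sig (k+1):ℝ) * Q (n+3-k) x with hA
    set B := ∑ k ∈ Finset.range (n+4), (sig (k+2):ℝ) * Q (n+3-k) x with hB
    have key : ((n:ℝ)+5) * (x * Q (n+4) x - Q (n+5) x) = x * (x * A - B) := by
      linear_combination x * e2 - e1
    have hAB : x * A - B = ∑ k ∈ Finset.range (n+4), F k := by
      rw [hA, hB, Finset.mul_sum, ← Finset.sum_sub_distrib]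
      apply Finset.sum_congr rfl
      intro k _
      rw [hF]
      ring
    -- split off first two terms
    have hsplit : ∑ k ∈ Finset.range (n+4), F k
        = (x * 1 - 3) * Q (n+3) x + (x * 3 - 4) * Q (n+2) x
          + ∑ k ∈ Finset.range (n+2), (x * (sig (k+3):ℝ) - (sig (k+4):ℝ)) * Q (n+1-k) x := by
      calc ∑ k ∈ Finset.range (n+4), F k
          = ∑ k ∈ Finset.range (n+3), F (k+1) + F 0 := Finset.sum_range_succ' F (n+3)
        _ = (∑ k ∈ Finset.range (n+2), F (k+2) + F 1) + F 0 :=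
            congrArg (· + F 0) (Finset.sum_range_succ' (fun k => F (k+1)) (n+2))
        _ = _ := by
            have h0 : F 0 = (x * 1 - 3) * Q (n+3) x := by
              rw [hF]; norm_num [sig1, sig2]
            have hone : F 1 = (x * 3 - 4) * Q (n+2) x := by
              rw [hF]; norm_num [sig2, sig3]
            have h2 : ∑ k ∈ Finset.range (n+2), F (k+2)
                = ∑ k ∈ Finset.range (n+2), (x * (sig (k+3):ℝ) - (sig (k+4):ℝ)) * Q (n+1-k) x := by
              apply Finset.sum_congr rfl
              intro k _
              have hidx : n + 3 - (k+2) = n+1-k := by omega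
              show (x * (sig (k+2+1):ℝ) - (sig (k+2+2):ℝ)) * Q (n+3-(k+2)) x = _
              rw [hidx]
            rw [h0, hone, h2]
            ring
    -- bound the first two terms
    have hQ2 : 0 < Q (n+2) x := Q_pos _ _ hx0
    have hQ3 : 0 < Q (n+3) x := Q_pos _ _ hx0
    have hfirst : 0 ≤ (x * 1 - 3) * Q (n+3) x + (x * 3 - 4) * Q (n+2) x := by
      rcases le_or_gt 3 x with h3 | h3
      · nlinarith
      · nlinarith [mul_nonneg (by linarith : (0:ℝ) ≤ 3 - x) (by linarith : 0 ≤ x * Q (n+2) x - Q (n+3) x),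
          mul_nonneg (mul_nonneg (by linarith : (0:ℝ) ≤ x - 2) (by linarith : (0:ℝ) ≤ x + 2)) hQ2.le]
    -- bound the tail sum
    have htail : 1 ≤ ∑ k ∈ Finset.range (n+2), (x * (sig (k+3):ℝ) - (sig (k+4):ℝ)) * Q (n+1-k) x := by
      have step1 : ∑ k ∈ Finset.range (n+2), (2 * (sig (k+3):ℝ) - (sig (k+4):ℝ)) * Q (n+1-k) x
          ≤ ∑ k ∈ Finset.range (n+2), (x * (sig (k+3):ℝ) - (sig (k+4):ℝ)) * Q (n+1-k) x := by
        apply Finset.sum_le_sum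
        intro k _
        have hq : 0 ≤ Q (n+1-k) x := (Q_pos _ _ hx0).le
        have hs : (0:ℝ) ≤ (sig (k+3):ℝ) := by positivity
        nlinarith [mul_nonneg (mul_nonneg (by linarith : (0:ℝ) ≤ x - 2) hs) hq]
      have step2 := abel_lower (fun k => 2 * (sig (k+3):ℝ) - (sig (k+4):ℝ))
        (fun k => Q (n+1-k) x)
        (fun k => (Q_pos _ _ hx0).le)
        (fun k => Q_index_mono (Nat.sub_le_sub_left (Nat.le_succ k) (n+1)) x hx1)
        Csum_nonneg (n+1)
      have hg : Q (n+1-(n+1)) x = 1 := by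
        have : n+1-(n+1) = 0 := by omega
        rw [this, Q_zero]
      simp only [hg, mul_one] at step2
      have hone := Csum_one (n+2) (by omega)
      calc (1:ℝ) ≤ ∑ k ∈ Finset.range (n+2), (2 * (sig (k+3):ℝ) - (sig (k+4):ℝ)) := hone
        _ ≤ ∑ k ∈ Finset.range (n+2), (2 * (sig (k+3):ℝ) - (sig (k+4):ℝ)) * Q (n+1-k) x := step2
        _ ≤ _ := step1
    -- conclude
    have hpos : 0 < ((n:ℝ)+5) * (x * Q (n+4) x - Q (n+5) x) := by
      rw [key, hAB, hsplit]
      nlinarith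
    nlinarith [hpos]

lemma P_one_eq : P 1 = X := by
  rw [P]
  simp [P, Finset.sum_range_one, show (∑ d ∈ Nat.divisors 1, d) = 1 from by decide]

lemma delta_eval (a : ℕ) (x : ℝ) :
    (Δ a 0).eval x = Q (a-1) x * x - Q a x := by
  have h0 : P 0 = 1 := by rw [P]
  simp [Δ, P_one_eq, Q, h0]

theorem stmt5 (a : ℕ) (ha : 5 ≤ a) :
    ∃ α : ℝ, 1 < α ∧ α < 2 ∧ (Δ a 0).eval α = 0 ∧
      ∀ x : ℝ, α < x → 0 < (Δ a 0).eval x := by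
  obtain ⟨n, rfl⟩ : ∃ n, a = n + 5 := ⟨a - 5, by omega⟩
  set f : ℝ → ℝ := fun x => (Δ (n+5) 0).eval x with hf
  have hcont : Continuous f := by
    unfold f
    exact Polynomial.continuous _
  have hub : ∀ x : ℝ, 2 ≤ x → 0 < f x := by
    intro x hx
    have h := (B_core n x hx).2
    rw [hf]
    simp only
    rw [delta_eval]
    have : n + 5 - 1 = n + 4 := by omega
    rw [this]
    nlinarith [h]
  have hneg : f 1 < 0 := by
    have h := Q_succ_lt (n+3) 1 le_rfl
    rw [hf]; simp only
    rw [delta_eval]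
    have : n + 5 - 1 = n + 4 := by omega
    rw [this]
    have h45 : n + 3 + 1 = n + 4 := by omega
    have h55 : n + 3 + 2 = n + 5 := by omega
    rw [h45, h55] at h
    linarith
  set S : Set ℝ := {x | f x ≤ 0} with hS
  have hSne : S.Nonempty := ⟨1, le_of_lt hneg⟩
  have hSb : BddAbove S := by
    refine ⟨2, fun y hy => ?_⟩
    by_contra hc
    push_neg at hc
    exact absurd hy (not_le.mpr (hub y (le_of_lt hc)))
  have hSclosed : IsClosed S := isClosed_le hcont continuous_const
  set α := sSup S with hα
  have hαS : α ∈ S := hSclosed.csSup_mem hSne hSb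
  have hα2 : α < 2 := by
    by_contra hc
    push_neg at hc
    exact absurd hαS (not_le.mpr (hub α hc))
  have hpos : ∀ x : ℝ, α < x → 0 < f x := by
    intro x hxα
    by_contra hc
    push_neg at hc
    exact absurd (le_csSup hSb (hc : x ∈ S)) (not_le.mpr hxα)
  have hα1 : 1 < α := by
    have hev : ∀ᶠ y in nhdsWithin 1 (Set.Ioi (1:ℝ)), f y < 0 := by
      have ht : Filter.Tendsto f (nhdsWithin 1 (Set.Ioi (1:ℝ))) (nhds (f 1)) :=
        (hcont.continuousAt).mono_left nhdsWithin_le_nhds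
      exact ht.eventually (eventually_lt_nhds hneg)
    have hmem : ∀ᶠ y in nhdsWithin 1 (Set.Ioi (1:ℝ)), y ∈ Set.Ioi (1:ℝ) :=
      eventually_mem_nhdsWithin
    obtain ⟨y, hy1, hy2⟩ := (hev.and hmem).exists
    calc (1:ℝ) < y := hy2
      _ ≤ α := le_csSup hSb (le_of_lt hy1)
  have hzero : f α = 0 := by
    refine le_antisymm hαS ?_
    have ht : Filter.Tendsto f (nhdsWithin α (Set.Ioi α)) (nhds (f α)) :=
      (hcont.continuousAt).mono_left nhdsWithin_le_nhds
    refine ge_of_tendsto ht ?_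
    filter_upwards [eventually_mem_nhdsWithin] with y hy
    exact (hpos y hy).le
  exact ⟨α, hα1, hα2, hzero, hpos⟩
end

section
/- Let q(n) := p(n)/p(n−1) for n ≥ 1. Then q(27) ≥ q(n) for every integer n ≥ 27; equivalently, p(27)·p(n−1) ≥ p(26)·p(n) for every n ≥ 27. -/
/-- The partition function `p n`. -/
def p (n : ℕ) : ℕ := Fintype.card (Nat.Partition n)

/-!
Let `pGe k n` count the partitions of `n` into parts `≥ k`. Removing a part `1` shows
`p n = p (n - 1) + pGe 2 n`, so with `p 26 = 2436` and `p 27 - p 26 = 574` the claim becomes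
`2436 * pGe 2 n ≤ 574 * p (n - 1)`.

Removing a part `k` gives `pGe k n = pGe k (n - k) + pGe (k + 1) n`, and the sums
`pGeSum k n = ∑ j < k, pGe k (n - 1 - j)`, which start with `pGeSum 1 n = p (n - 1)`, obey the
same recursion `pGeSum k n = pGeSum k (n - k - 1) + pGeSum (k + 1) n`. Hence a bound
`a * pGe (k + 1) n ≤ b * pGeSum k n` at level `k` follows from the same bound at
`(k, n - k - 1)` and at `(k + 1, n)`. For `k ≥ 7` it holds with `(a, b) = (13, 3)` for all
`n ≥ k + 5`: in the base window `n ≤ 2k + 5` only partitions into at most two parts occur, and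
their number is explicit. For `k ≤ 6` it remains to check `k + 1` consecutive values of `n`,
starting at `26 + (k + 1).choose 2`; these finitely many cases are evaluated from a
dynamic-programming table of `pGe k m` for `m ≤ 53`.
-/

open Finset Nat.Partition

def pGe (k n : ℕ) : ℕ := #(restricted n (k ≤ ·))

lemma pGe_one (n : ℕ) : pGe 1 n = p n := by
  rw [pGe, p, ← card_univ, restricted, filter_true_of_mem]
  exact fun P _ i hi => P.parts_pos hi

lemma pGe_zero_right (k : ℕ) : pGe k 0 = 1 := by
  rw [pGe, restricted, filter_true_of_mem (by simp), card_univ, Fintype.card_unique]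

lemma pGe_eq_zero {k n : ℕ} (hn : n ≠ 0) (hnk : n < k) : pGe k n = 0 := by
  rw [pGe, card_eq_zero, restricted, filter_eq_empty_iff]
  intro P _ hP
  obtain ⟨i, hi⟩ := Multiset.exists_mem_of_ne_zero (s := P.parts) fun h => hn (by
    rw [← P.parts_sum, h, Multiset.sum_zero])
  exact absurd (hP i hi) (by have := le_of_mem_parts hi; omega)

lemma card_restricted_filter_mem_parts {k n : ℕ} (hk : 1 ≤ k) (hkn : k ≤ n) :
    #{P ∈ restricted n (k ≤ ·) | k ∈ P.parts} = pGe k (n - k) := by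
  let e := partitionWithPartEquiv hk hkn
  refine card_bij' (fun P hP => e ⟨P, (mem_filter.1 hP).2⟩) (fun Q _ => (e.symm Q).1)
    ?_ ?_ (fun P _ => by simp) (fun Q _ => by simp)
  · intro P hP
    simp only [restricted, mem_filter, mem_univ, true_and] at hP ⊢
    intro i hi
    exact hP.1 i (Multiset.mem_of_mem_erase (by simpa [e] using hi))
  · intro Q hQ
    simp only [restricted, mem_filter, mem_univ, true_and] at hQ ⊢
    refine ⟨fun i hi => ?_, (e.symm Q).2⟩
    rw [partitionWithPartEquiv_symm_apply_parts, Multiset.mem_cons] at hi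
    rcases hi with rfl | hi
    exacts [le_rfl, hQ i hi]

lemma pGe_eq_add {k n : ℕ} (hk : 1 ≤ k) (hkn : k ≤ n) :
    pGe k n = pGe k (n - k) + pGe (k + 1) n := by
  rw [← card_restricted_filter_mem_parts hk hkn, pGe,
    ← card_filter_add_card_filter_not fun P : n.Partition => k ∈ P.parts]
  congr 2
  ext P
  simp only [restricted, mem_filter, mem_univ, true_and]
  constructor
  · rintro ⟨hP, hkP⟩ i hi
    exact lt_of_le_of_ne (hP i hi) fun h => hkP (h ▸ hi)
  · intro hP
    exact ⟨fun i hi => Nat.le_of_succ_le (hP i hi), fun h => Nat.not_succ_le_self k (hP k h)⟩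

lemma pGe_eq_of_lt_three_mul {k n : ℕ} (hkn : k ≤ n) (hn : n < 3 * k) :
    pGe k n = (n + 2 - 2 * k) / 2 + 1 := by
  have hk : 1 ≤ k := by omega
  have hrest : pGe k (n - k) = if k < n ∧ n < 2 * k then 0 else 1 := by
    split_ifs with h
    · exact pGe_eq_zero (by omega) (by omega)
    · rcases eq_or_lt_of_le hkn with rfl | hlt
      · rw [Nat.sub_self, pGe_zero_right]
      · rw [pGe_eq_of_lt_three_mul (by omega) (by omega)]
        omega
  have hsucc : pGe (k + 1) n = if n = k then 0 else (n - 2 * k) / 2 + 1 := by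
    split_ifs with h
    · exact pGe_eq_zero (by omega) (by omega)
    · rw [pGe_eq_of_lt_three_mul (by omega) (by omega)]
      omega
  rw [pGe_eq_add hk hkn, hrest, hsucc]
  split_ifs <;> omega
termination_by n - k

def pGeSum (k n : ℕ) : ℕ := ∑ j ∈ range k, pGe k (n - 1 - j)

lemma pGeSum_eq_add {k n : ℕ} (hk : 1 ≤ k) (hn : 2 * k + 1 ≤ n) :
    pGeSum k n = pGeSum k (n - (k + 1)) + pGeSum (k + 1) n := by
  have hsplit : pGeSum k n =
      ∑ j ∈ range k, pGe k (n - (k + 1) - j) + ∑ j ∈ range k, pGe (k + 1) (n - 1 - j) := by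
    rw [pGeSum, ← sum_add_distrib]
    refine sum_congr rfl fun j hj => ?_
    rw [pGe_eq_add hk (by rw [mem_range] at hj; omega)]
    congr 2
    omega
  -- Shifting the window by one trades `pGe k (n - (k + 1))` for `pGe k (n - (2 * k + 1))`,
  -- and by the recursion these differ by `pGe (k + 1) (n - (k + 1))`.
  have hshift := sum_range_succ (fun j => pGe k (n - (k + 1) - j)) k
  rw [sum_range_succ'] at hshift
  have hlow : ∑ j ∈ range k, pGe k (n - (k + 1) - (j + 1)) = pGeSum k (n - (k + 1)) :=
    sum_congr rfl fun j _ => congrArg (pGe k) (by omega)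
  have hbot := pGe_eq_add (n := n - (k + 1)) hk (by omega)
  have hnext : pGeSum (k + 1) n =
      ∑ j ∈ range k, pGe (k + 1) (n - 1 - j) + pGe (k + 1) (n - (k + 1)) := by
    rw [pGeSum, sum_range_succ, show n - 1 - k = n - (k + 1) by omega]
  rw [Nat.sub_zero] at hshift
  omega

def RatioBound (a b k n : ℕ) : Prop := a * pGe (k + 1) n ≤ b * pGeSum k n

lemma RatioBound.step {a b k n : ℕ} (hk : 1 ≤ k) (hn : 2 * k + 1 ≤ n)
    (hprev : RatioBound a b k (n - (k + 1))) (hnext : RatioBound a b (k + 1) n) :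
    RatioBound a b k n := by
  unfold RatioBound at *
  rw [pGe_eq_add (by omega) (by omega), pGeSum_eq_add hk hn, mul_add, mul_add]
  exact add_le_add hprev hnext

lemma RatioBound.of_window {a b k N : ℕ} (hk : 1 ≤ k) (hkN : k ≤ N)
    (hwindow : ∀ n, N ≤ n → n < N + (k + 1) → RatioBound a b k n)
    (hnext : ∀ n, N + (k + 1) ≤ n → RatioBound a b (k + 1) n) :
    ∀ n, N ≤ n → RatioBound a b k n := by
  intro n hn
  induction n using Nat.strong_induction_on with
  | _ n ih =>
    by_cases hlt : n < N + (k + 1)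
    · exact hwindow n hn hlt
    · exact .step hk (by omega) (ih _ (by omega) (by omega)) (hnext n (by omega))

lemma RatioBound.mono {a b a' b' k n : ℕ} (h : RatioBound a b k n) (ha : 0 < a)
    (hab : a' * b ≤ a * b') : RatioBound a' b' k n := by
  unfold RatioBound at *
  refine le_of_mul_le_mul_left ?_ ha
  calc a * (a' * pGe (k + 1) n) = a' * (a * pGe (k + 1) n) := by ring
    _ ≤ a' * (b * pGeSum k n) := Nat.mul_le_mul_left _ h
    _ = (a' * b) * pGeSum k n := by ring
    _ ≤ (a * b') * pGeSum k n := Nat.mul_le_mul_right _ hab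
    _ = a * (b' * pGeSum k n) := by ring

-- `a / b = 13 / 3` is the largest ratio that survives the case `k = 7`, `n = 2 * k + 4`.
lemma ratioBound_thirteen_three_of_le {k n : ℕ} (hk : 7 ≤ k) (hn₁ : k + 5 ≤ n)
    (hn₂ : n ≤ 2 * k + 5) :
    RatioBound 13 3 k n := by
  have hterm : ∀ j < k, k + j < n → pGe k (n - 1 - j) = (n - 1 - j + 2 - 2 * k) / 2 + 1 :=
    fun j _ hj => pGe_eq_of_lt_three_mul (by omega) (by omega)
  have htop : pGe (k + 1) n = (n - 2 * k) / 2 + 1 := by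
    rw [pGe_eq_of_lt_three_mul (by omega) (by omega)]
    omega
  have hsplit := sum_range_add_sum_Ico (fun j => pGe k (n - 1 - j)) (show 5 ≤ k by omega)
  have htail : 2 * k + 2 ≤ n → k - 5 ≤ ∑ j ∈ Ico 5 k, pGe k (n - 1 - j) := by
    intro h
    simpa using card_nsmul_le_sum (Ico 5 k) (fun j => pGe k (n - 1 - j)) 1
      fun j hj => by simp only [mem_Ico] at hj; rw [hterm j hj.2 (by omega)]; omega
  simp only [sum_range_succ, sum_range_zero] at hsplit
  have := hterm 0 (by omega) (by omega)
  have := hterm 1 (by omega) (by omega)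
  have := hterm 2 (by omega) (by omega)
  have := hterm 3 (by omega) (by omega)
  have := hterm 4 (by omega) (by omega)
  unfold RatioBound pGeSum
  omega

theorem ratioBound_thirteen_three {k n : ℕ} (hk : 7 ≤ k) (hn : k + 5 ≤ n) :
    RatioBound 13 3 k n := by
  by_cases hwindow : n ≤ 2 * k + 5
  · exact ratioBound_thirteen_three_of_le hk hn hwindow
  · exact .step (by omega) (by omega) (ratioBound_thirteen_three hk (by omega))
      (ratioBound_thirteen_three (by omega) (by omega))
termination_by 2 * n - k

/-- `acc` holds the new row computed so far in reverse order, so the entry `k` places back,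
needed by `pGe k m = pGe (k + 1) m + pGe k (m - k)`, sits at index `k - 1`. -/
def rowAddPart (k : ℕ) : List ℕ → List ℕ → List ℕ
  | acc, [] => acc.reverse
  | acc, x :: xs => rowAddPart k ((x + acc.getD (k - 1) 0) :: acc) xs

lemma getD_map_reverse_range (g : ℕ → ℕ) (i j : ℕ) :
    ((List.range j).reverse.map g).getD i 0 = if i < j then g (j - 1 - i) else 0 := by
  rw [List.getD_eq_getElem?_getD, List.getElem?_map]
  split_ifs with h
  · rw [List.getElem?_reverse (by simpa using h)]
    simp [show j - 1 - i < j by omega]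
  · rw [List.getElem?_eq_none (by simpa using h)]
    rfl

lemma rowAddPart_map_range {k : ℕ} (hk : 1 ≤ k) {f g : ℕ → ℕ}
    (hg : ∀ m, g m = f m + if k ≤ m then g (m - k) else 0) (j len : ℕ) :
    rowAddPart k ((List.range j).reverse.map g) ((List.range' j len).map f) =
      (List.range (j + len)).map g := by
  induction len generalizing j with
  | zero => simp [rowAddPart, List.map_reverse]
  | succ len ih =>
    rw [List.range'_succ, List.map_cons, rowAddPart, getD_map_reverse_range,
      show j + (len + 1) = (j + 1) + len by omega, ← ih, List.range_succ, List.reverse_append,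
      List.reverse_singleton, List.singleton_append, List.map_cons, hg j]
    congr 3
    split_ifs <;> first | omega | congr 1; omega

lemma pGe_eq_pGe_succ_add_ite {k : ℕ} (hk : 1 ≤ k) (n : ℕ) :
    pGe k n = pGe (k + 1) n + if k ≤ n then pGe k (n - k) else 0 := by
  split_ifs with hkn
  · rw [pGe_eq_add hk hkn, add_comm]
  · rcases Nat.eq_zero_or_pos n with rfl | hn
    · simp [pGe_zero_right]
    · rw [pGe_eq_zero hn.ne' (by omega), pGe_eq_zero hn.ne' (by omega)]

def pGeRowFrom (N : ℕ) : ℕ → List ℕ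
  | 0 => (List.range (N + 1)).map fun m => if m = 0 then 1 else 0
  | d + 1 => rowAddPart (N - d) [] (pGeRowFrom N d)

lemma pGeRowFrom_eq {N d : ℕ} (hd : d ≤ N) :
    pGeRowFrom N d = (List.range (N + 1)).map (pGe (N + 1 - d)) := by
  induction d with
  | zero =>
    refine List.map_congr_left fun m hm => ?_
    rw [List.mem_range] at hm
    split_ifs with h
    · rw [h, pGe_zero_right]
    · rw [pGe_eq_zero h (by omega)]
  | succ d ih =>
    rw [pGeRowFrom, ih (by omega), show N + 1 - d = N - d + 1 by omega,
      show N + 1 - (d + 1) = N - d by omega]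
    have := rowAddPart_map_range (k := N - d) (by omega) (pGe_eq_pGe_succ_add_ite (by omega))
      0 (N + 1)
    rwa [List.range_zero, List.reverse_nil, List.map_nil, zero_add, ← List.range_eq_range']
      at this

def pGeTab (N k m : ℕ) : ℕ := (pGeRowFrom N (N + 1 - k)).getD m 0

lemma pGe_eq_pGeTab {N k m : ℕ} (hk : 1 ≤ k) (hkN : k ≤ N + 1) (hm : m ≤ N) :
    pGe k m = pGeTab N k m := by
  rw [pGeTab, pGeRowFrom_eq (by omega), show N + 1 - (N + 1 - k) = k by omega,
    List.getD_eq_getElem?_getD, List.getElem?_map, List.getElem?_range (by omega)]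
  rfl

lemma ratioBound_iff_pGeTab {a b k n N : ℕ} (hk : 1 ≤ k) (hkN : k ≤ N) (hn : n ≤ N) :
    RatioBound a b k n ↔
      a * pGeTab N (k + 1) n ≤ b * ∑ j ∈ range k, pGeTab N k (n - 1 - j) := by
  rw [RatioBound, pGeSum, pGe_eq_pGeTab (by omega) (by omega) hn,
    sum_congr rfl fun j _ => pGe_eq_pGeTab (N := N) hk (by omega) (by omega)]

lemma ratioBound_window {k n : ℕ} (hk : 1 ≤ k) (hk6 : k ≤ 6)
    (hn₁ : 26 + (k + 1).choose 2 ≤ n)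
    (hn₂ : n < 26 + (k + 1).choose 2 + (k + 1)) : RatioBound 2436 574 k n := by
  have hcheck : ∀ k < 7, 1 ≤ k → ∀ i < k + 1,
      2436 * pGeTab 53 (k + 1) (26 + (k + 1).choose 2 + i) ≤
        574 * ∑ j ∈ range k, pGeTab 53 k (26 + (k + 1).choose 2 + i - 1 - j) := by
    decide +kernel
  obtain ⟨i, rfl⟩ : ∃ i, n = 26 + (k + 1).choose 2 + i :=
    ⟨n - (26 + (k + 1).choose 2), by omega⟩
  have hchoose : (k + 1).choose 2 ≤ 21 := Nat.choose_le_choose 2 (show k + 1 ≤ 7 by omega)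
  rw [ratioBound_iff_pGeTab (N := 53) hk (by omega) (by omega)]
  exact hcheck k (by omega) hk i (by omega)

theorem ratioBound_of_choose_le {k n : ℕ} (hk : 1 ≤ k) (hk7 : k ≤ 7)
    (hn : 26 + (k + 1).choose 2 ≤ n) : RatioBound 2436 574 k n := by
  rcases hk7.lt_or_eq with hk7 | rfl
  · have hstep : (k + 1 + 1).choose 2 = (k + 1).choose 2 + (k + 1) := by
      rw [Nat.choose_succ_succ', Nat.choose_one_right, add_comm]
    exact RatioBound.of_window hk (by omega)
      (fun n h₁ h₂ => ratioBound_window hk (by omega) h₁ h₂)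
      (fun n h => ratioBound_of_choose_le (by omega) (by omega) (by omega)) n hn
  · have hchoose : (7 + 1).choose 2 = 28 := rfl
    exact (ratioBound_thirteen_three le_rfl (by omega)).mono (by norm_num) (by norm_num)
termination_by 7 - k

theorem stmt8 (n : ℕ) (hn : 27 ≤ n) :
    p 26 * p n ≤ p 27 * p (n - 1) := by
  have hratio : 2436 * pGe 2 n ≤ 574 * p (n - 1) := by
    simpa [RatioBound, pGeSum, pGe_one] using
      ratioBound_of_choose_le (n := n) le_rfl (by norm_num) (by simpa using hn)
  have hrec : p n = p (n - 1) + pGe 2 n := by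
    rw [← pGe_one, ← pGe_one, pGe_eq_add le_rfl (by omega)]
  have hp : p 26 = 2436 ∧ p 27 = 3010 := by
    rw [← pGe_one, ← pGe_one, pGe_eq_pGeTab (N := 27) le_rfl (by norm_num) (by norm_num),
      pGe_eq_pGeTab (N := 27) le_rfl (by norm_num) le_rfl]
    decide +kernel
  rw [hrec, hp.1, hp.2]
  omega
end
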